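/- Let ε, η_ε > 0 with η_ε/ε ∈ ℕ and η_ε ≥ 8ε, let Ω ⊆ U be open subsets of ℝ³, fix q ∈ [2,∞), γ_ε>0 and a curvature cell energy W^curv_ε with constants 0<c≤C₀, and let i ∈ εℤ³ with Q_{3η_ε}(i) ⊆ U. If E ⊆ Z_ε(Ω) is not locally flat in Q_{(3/2)η_ε}(i), then F^curv_ε(E, Q_{3η_ε}(i)) ≥ c′·γ_ε·η_ε^{2−q}, where c′>0 depends only on c (one may take c′ = c/512). -/

import Mathlib

open Set Filter MeasureTheory Metric
open scoped BigOperators ENNReal Topology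

noncomputable section

attribute [local instance] Classical.propDecidable

/-- Three-dimensional Euclidean space. -/
abbrev E3 := EuclideanSpace ℝ (Fin 3)

/-- `x` is a point of the lattice `εℤ³`. -/
def lat (ε : ℝ) (x : E3) : Prop := ∀ k, ∃ n : ℤ, x k = ε * n

/-- `Z_ε(A) := εℤ³ ∩ A`. -/
def Zset (ε : ℝ) (A : Set E3) : Set E3 := {x | lat ε x ∧ x ∈ A}

/-- The half-open cube `Q_ρ(x) = x + ρ[-1/2,1/2)³`. -/
def cube (ρ : ℝ) (x : E3) : Set E3 := {y | ∀ k, x k - ρ / 2 ≤ y k ∧ y k < x k + ρ / 2}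

/-- `k̂ := k + ε(1/2,1/2,1/2)`. -/
def hat (ε : ℝ) (k : E3) : E3 := WithLp.toLp 2 (fun j => k j + ε / 2)

/-- The "half-cube" pattern: the lattice points of `Q_{2ε}(k̂)` whose `m`-th coordinate
equals `v`.  For `v ∈ {k m, k m + ε}` these are exactly the images of the reference
pattern `{k, k+εe₁, k+εe₂, k+ε(e₁+e₂)}` under rotations by multiples of `π/2`
about axes through `k̂` parallel to coordinate vectors. -/
def halfPattern (ε : ℝ) (k : E3) (m : Fin 3) (v : ℝ) : Set E3 :=
  {p | lat ε p ∧ p ∈ cube (2 * ε) (hat ε k) ∧ p m = v}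

/-- `E` is locally flat in `Q_η(x)` (with respect to `U`). -/
def LocallyFlat (ε η : ℝ) (U E : Set E3) (x : E3) : Prop :=
  ∀ k : E3, lat ε k → (cube η x ∩ cube (2 * ε) (hat ε k)).Nonempty →
    E ∩ cube (2 * ε) (hat ε k) = Zset ε (cube (2 * ε) (hat ε k)) ∩ U ∨
    E ∩ cube (2 * ε) (hat ε k) = ∅ ∨
    ∃ m : Fin 3, ∃ v : ℝ, (v = k m ∨ v = k m + ε) ∧
      E ∩ cube (2 * ε) (hat ε k) = halfPattern ε k m v ∩ U

/-- `E` is cubic in `Q_η(x)` (with respect to `U`), at the mesoscale `ηm`. -/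
def CubicSet (ε ηm η : ℝ) (U E : Set E3) (x : E3) : Prop :=
  ∃ i0 ∈ Zset ε (cube ηm (0 : E3)), ∃ K : Finset E3,
    (∀ k ∈ K, ∃ z : Fin 3 → ℤ, ∀ j, k j = i0 j + ηm * (z j : ℝ)) ∧
    E ∩ cube η x = Zset ε (⋃ k ∈ K, cube ηm k) ∩ cube η x ∩ U

/-- `E` is flat in `Q_{ηm}(x)` (with respect to `U`): cubic and locally flat. -/
def FlatSet (ε ηm : ℝ) (U E : Set E3) (x : E3) : Prop :=
  CubicSet ε ηm ηm U E x ∧ LocallyFlat ε ηm U E x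

/-- `E` is a simple coordinate laminate in `A` with normal `e_m` (with respect to `U`):
there is `h : ℝ → {0,1}` with `χ_{Z_ε(A) ∩ E}(i) = h(i·e_m)·χ_{Z_ε(A)}(i)` for all
`i ∈ Z_ε(U)`. -/
def LaminateWith (ε : ℝ) (U A E : Set E3) (m : Fin 3) : Prop :=
  ∃ h : ℝ → Prop, ∀ i ∈ Zset ε U, (i ∈ Zset ε A ∩ E ↔ h (i m) ∧ i ∈ Zset ε A)

/-- `E` is a simple coordinate laminate in `A` (with respect to `U`). -/
def Laminate (ε : ℝ) (U A E : Set E3) : Prop := ∃ m : Fin 3, LaminateWith ε U A E m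

/-- Embedding of `ℤ³` into `ℝ³`. -/
def toE3 (ξ : Fin 3 → ℤ) : E3 := WithLp.toLp 2 (fun j => (ξ j : ℝ))

/-- The coordinate unit vector `e_m` of `ℤ³`. -/
def unitZ (m : Fin 3) : Fin 3 → ℤ := fun j => if j = m then 1 else 0

/-- Discrete anisotropic perimeter energy
`F^per_ε(E,A) = Σ_{i ∈ Z_ε(A) ∩ E} Σ_{ξ ∈ V, i+εξ ∈ Z_ε(U)} ε² c_ξ (1 - χ_E(i+εξ))`. -/
noncomputable def Fper (ε : ℝ) (V : Finset (Fin 3 → ℤ)) (c : (Fin 3 → ℤ) → ℝ)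
    (U E A : Set E3) : ℝ :=
  ∑' i : ↥(Zset ε A ∩ E), ∑ ξ ∈ V,
    if (↑i + ε • toE3 ξ) ∈ Zset ε U ∧ (↑i + ε • toE3 ξ) ∉ E then ε ^ 2 * c ξ else 0

/-- Discrete curvature energy `F^curv_ε(E,A) = Σ_{i ∈ Z_ε(A)} ε³ W(i)`, where
`W i = W^curv_ε(i,E)`. -/
noncomputable def Fcurv (ε : ℝ) (W : E3 → ℝ) (A : Set E3) : ℝ :=
  ∑' i : ↥(Zset ε A), ε ^ 3 * W ↑i

/-- `W` is a curvature cell energy at scale `ε`, mesoscale `ηm`, with parameters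
`γ, q` and constants `0 < cc ≤ C0`, for subsets of `Z_ε(Ω)`, flatness being understood
with respect to `U`. -/
def IsCurvCell (ε ηm γ q cc C0 : ℝ) (Ω U : Set E3) (W : E3 → Set E3 → ℝ) : Prop :=
  (∀ i E, lat ε i → E ⊆ Zset ε Ω → 0 ≤ W i E) ∧
  (∀ i E, lat ε i → E ⊆ Zset ε Ω → FlatSet ε ηm U E i → W i E = 0) ∧
  (∀ i E, lat ε i → E ⊆ Zset ε Ω → ¬ LocallyFlat ε ηm U E i →
      cc * γ * ηm ^ (-1 - q : ℝ) ≤ W i E) ∧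
  (∀ i E, lat ε i → E ⊆ Zset ε Ω → CubicSet ε ηm ηm U E i →
      W i E ≤ C0 * γ * ηm ^ (-1 - q : ℝ))

/-- The `ηm`-scale replacement
`E_{ηm} := ⋃ {Z_ε(Q_{ηm}(i)) : i ∈ ηmℤ³, E ∩ Q_{ηm}(i) ≠ ∅} ∩ Ω`. -/
def etaRepl (ε ηm : ℝ) (Ω E : Set E3) : Set E3 :=
  {x | lat ε x ∧ x ∈ Ω ∧
    ∃ i : E3, (∀ j, ∃ n : ℤ, i j = ηm * n) ∧ x ∈ cube ηm i ∧ (E ∩ cube ηm i).Nonempty}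

/-- Lattice points in a cube form a finite set. -/
lemma zset_cube_finite (ε ρ : ℝ) (hε : 0 < ε) (x : E3) : (Zset ε (cube ρ x)).Finite := by
  have hfloor : ∀ m : ℤ, ⌊(ε * (m : ℝ)) / ε⌋ = m := by
    intro m
    have : (ε * (m : ℝ)) / ε = (m : ℝ) := by field_simp
    rw [this, Int.floor_intCast]
  apply Set.Finite.of_finite_image (f := fun p : E3 => fun l : Fin 3 => ⌊p l / ε⌋)
  · apply Set.Finite.subset
      (Set.Finite.pi (fun l : Fin 3 =>
        Set.finite_Icc ⌈(x l - ρ / 2) / ε⌉ ⌊(x l + ρ / 2) / ε⌋))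
    rintro _ ⟨p, ⟨hlat, hcube⟩, rfl⟩
    intro l _
    obtain ⟨m, hm⟩ := hlat l
    have hb := hcube l
    rw [hm] at hb
    simp only [Set.mem_Icc]
    rw [hm, hfloor]
    constructor
    · exact Int.ceil_le.mpr ((div_le_iff₀ hε).mpr (by nlinarith [hb.1]))
    · exact Int.le_floor.mpr ((le_div_iff₀ hε).mpr (by nlinarith [hb.2]))
  · intro p hp p' hp' h
    ext l
    obtain ⟨m, hm⟩ := hp.1 l
    obtain ⟨m', hm'⟩ := hp'.1 l
    have h1 : ⌊p l / ε⌋ = ⌊p' l / ε⌋ := congrFun h l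
    rw [hm, hm', hfloor, hfloor] at h1
    rw [hm, hm', h1]

/-- If `E` is not locally flat in `Q_{(3/2)η_ε}(i)` then the
curvature energy in `Q_{3η_ε}(i)` is at least `(c/512)·γ_ε·η_ε^{2-q}`. -/
theorem statement4 (ε ηm : ℝ) (hε : 0 < ε) (hratio : ∃ n : ℕ, ηm = (n : ℝ) * ε)
    (h8 : 8 * ε ≤ ηm)
    (Ω U : Set E3) (hΩ : IsOpen Ω) (hU : IsOpen U) (hΩU : Ω ⊆ U)
    (q : ℝ) (hq : 2 ≤ q) (γ cc C0 : ℝ) (hγ : 0 < γ) (hcc : 0 < cc) (hccC0 : cc ≤ C0)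
    (W : E3 → Set E3 → ℝ) (hW : IsCurvCell ε ηm γ q cc C0 Ω U W)
    (i : E3) (hi : lat ε i) (hQU : cube (3 * ηm) i ⊆ U)
    (E : Set E3) (hE : E ⊆ Zset ε Ω)
    (hnflat : ¬ LocallyFlat ε ((3 / 2) * ηm) U E i) :
    cc / 512 * γ * ηm ^ ((2 : ℝ) - q) ≤
      Fcurv ε (fun j => W j E) (cube (3 * ηm) i) := by
  obtain ⟨n, hn⟩ := hratio
  obtain ⟨hW0, hWflat, hWlb, hWub⟩ := hW
  have hεne : ε ≠ 0 := hε.ne'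
  have hn8 : (8 : ℝ) ≤ (n : ℝ) := by
    rw [hn] at h8; nlinarith
  have hηm : 0 < ηm := by nlinarith
  -- extract the bad cell
  rw [LocallyFlat, not_forall] at hnflat
  obtain ⟨k, hknot⟩ := hnflat
  rw [Classical.not_imp, Classical.not_imp] at hknot
  obtain ⟨hk, hne, hD⟩ := hknot
  obtain ⟨x₀, hx₀Q, hx₀cell⟩ := hne
  have hx₀b : ∀ l, i l - (3 / 2 * ηm) / 2 ≤ x₀ l ∧ x₀ l < i l + (3 / 2 * ηm) / 2 := hx₀Q
  -- the family of lattice points j with x₀ ∈ Q_{ηm}(j)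
  set a : Fin 3 → ℤ := fun l => ⌊(x₀ l - ηm / 2) / ε⌋ with ha
  have haL : ∀ l, (a l : ℝ) * ε ≤ x₀ l - ηm / 2 :=
    fun l => (le_div_iff₀ hε).mp (Int.floor_le _)
  have haU : ∀ l, x₀ l - ηm / 2 < ((a l : ℝ) + 1) * ε :=
    fun l => (div_lt_iff₀ hε).mp (Int.lt_floor_add_one _)
  set B : Fin 3 → Finset ℤ := fun l => Finset.Ioc (a l) (a l + n) with hB
  set jm : (Fin 3 → ℤ) → E3 := fun z => WithLp.toLp 2 (fun l => ε * (z l : ℝ) : Fin 3 → ℝ) with hjm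
  have hjmem : ∀ z ∈ Fintype.piFinset B, jm z ∈ Zset ε (cube (3 * ηm) i) ∧
      x₀ ∈ cube ηm (jm z) := by
    intro z hz
    have hzb : ∀ l, a l < z l ∧ z l ≤ a l + n := by
      intro l
      have := Fintype.mem_piFinset.mp hz l
      simpa [hB, Finset.mem_Ioc] using this
    have key : ∀ l, x₀ l - ηm / 2 < ε * (z l : ℝ) ∧ ε * (z l : ℝ) ≤ x₀ l + ηm / 2 := by
      intro l
      obtain ⟨h1, h2⟩ := hzb l
      have h1' : (a l : ℝ) + 1 ≤ (z l : ℝ) := by exact_mod_cast h1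
      have h2' : (z l : ℝ) ≤ (a l : ℝ) + (n : ℝ) := by exact_mod_cast h2
      constructor
      · nlinarith [haU l]
      · nlinarith [haL l, hn]
    refine ⟨⟨fun l => ⟨z l, rfl⟩, fun l => ?_⟩, fun l => ?_⟩
    · have hk1 := key l
      have hb := hx₀b l
      constructor
      · show i l - 3 * ηm / 2 ≤ ε * (z l : ℝ)
        linarith [hk1.1, hb.1, hηm]
      · show ε * (z l : ℝ) < i l + 3 * ηm / 2
        linarith [hk1.2, hb.2, hηm]
    · have hk1 := key l
      constructor
      · show ε * (z l : ℝ) - ηm / 2 ≤ x₀ l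
        linarith [hk1.2]
      · show x₀ l < ε * (z l : ℝ) + ηm / 2
        linarith [hk1.1]
  -- injectivity
  have hjinj : Function.Injective jm := by
    intro z z' h
    funext l
    have h1 : ε * (z l : ℝ) = ε * (z' l : ℝ) := congrArg (fun v : E3 => v l) h
    exact_mod_cast mul_left_cancel₀ hεne h1
  set P : Finset E3 := (Fintype.piFinset B).image jm with hP
  have hcardP : P.card = n ^ 3 := by
    rw [hP, Finset.card_image_of_injective _ hjinj, Fintype.card_piFinset]
    simp [hB, Int.card_Ioc]
  -- finiteness, sum setup
  have hfin : (Zset ε (cube (3 * ηm) i)).Finite := zset_cube_finite ε (3 * ηm) hε i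
  haveI : Fintype ↥(Zset ε (cube (3 * ηm) i)) := hfin.fintype
  have hFc : Fcurv ε (fun j => W j E) (cube (3 * ηm) i) =
      ∑ x ∈ (Zset ε (cube (3 * ηm) i)).toFinset, ε ^ 3 * W x E := by
    rw [Fcurv, tsum_fintype]
    exact Finset.sum_set_coe (f := fun x => ε ^ 3 * W x E) (Zset ε (cube (3 * ηm) i))
  have hPsub : P ⊆ (Zset ε (cube (3 * ηm) i)).toFinset := by
    intro x hx
    obtain ⟨z, hz, rfl⟩ := Finset.mem_image.mp hx
    rw [Set.mem_toFinset]
    exact (hjmem z hz).1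
  -- lower bound on each term of P
  have hPbound : ∀ x ∈ P, ε ^ 3 * (cc * γ * ηm ^ (-1 - q : ℝ)) ≤ ε ^ 3 * W x E := by
    intro x hx
    obtain ⟨z, hz, rfl⟩ := Finset.mem_image.mp hx
    obtain ⟨⟨hlatx, _⟩, hx₀mem⟩ := hjmem z hz
    have hnl : ¬ LocallyFlat ε ηm U E (jm z) := by
      intro hLF
      exact hD (hLF k hk ⟨x₀, hx₀mem, hx₀cell⟩)
    exact mul_le_mul_of_nonneg_left (hWlb (jm z) E hlatx hE hnl) (by positivity)
  have h4 := Finset.card_nsmul_le_sum P _ _ hPbound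
  rw [hcardP, nsmul_eq_mul] at h4
  push_cast at h4
  have h2 : ∑ x ∈ P, ε ^ 3 * W x E ≤
      ∑ x ∈ (Zset ε (cube (3 * ηm) i)).toFinset, ε ^ 3 * W x E := by
    refine Finset.sum_le_sum_of_subset_of_nonneg hPsub (fun x hx _ => ?_)
    exact mul_nonneg (by positivity) (hW0 x E ((Set.mem_toFinset.mp hx).1) hE)
  -- arithmetic
  have hXpos : (0 : ℝ) < ηm ^ ((2 : ℝ) - q) := Real.rpow_pos_of_pos hηm _
  have hsplit : ηm ^ ((2 : ℝ) - q) = ηm ^ (3 : ℕ) * ηm ^ (-1 - q : ℝ) := by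
    rw [show ((2 : ℝ) - q) = ((3 : ℕ) : ℝ) + (-1 - q) by push_cast; ring,
      Real.rpow_add hηm, Real.rpow_natCast]
  have hcube3 : ηm ^ (3 : ℕ) = (n : ℝ) ^ 3 * ε ^ 3 := by rw [hn]; ring
  calc cc / 512 * γ * ηm ^ ((2 : ℝ) - q)
      ≤ cc * γ * ηm ^ ((2 : ℝ) - q) := by nlinarith [mul_pos hγ hXpos]
    _ = (n : ℝ) ^ 3 * (ε ^ 3 * (cc * γ * ηm ^ (-1 - q : ℝ))) := by
        rw [hsplit, hcube3]; ring
    _ ≤ ∑ x ∈ P, ε ^ 3 * W x E := h4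
    _ ≤ ∑ x ∈ (Zset ε (cube (3 * ηm) i)).toFinset, ε ^ 3 * W x E := h2
    _ = Fcurv ε (fun j => W j E) (cube (3 * ηm) i) := hFc.symm
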